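/- For every l ≥ 0, the space of ℝ³-valued polynomial vector fields of total degree ≤ l on ℝ³ decomposes as a direct sum 𝒢^l ⊕ 𝒢^{c,l}, where 𝒢^l = { ∇p : p polynomial of degree ≤ l+1 } and 𝒢^{c,l} = { x × v : v ℝ³-valued polynomial field of degree ≤ l−1 }. -/

import Mathlib

open MvPolynomial

/-- ℝ³-valued polynomial vector fields with components of total degree ≤ l. -/
noncomputable def polyVec3 (l : ℕ) : Submodule ℝ (Fin 3 → MvPolynomial (Fin 3) ℝ) :=
  Submodule.pi Set.univ fun _ => MvPolynomial.restrictTotalDegree (Fin 3) ℝ l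

/-- 𝒢^l = gradients of polynomials of degree ≤ l+1. -/
noncomputable def Gsp3 (l : ℕ) : Submodule ℝ (Fin 3 → MvPolynomial (Fin 3) ℝ) :=
  Submodule.span ℝ {v | ∃ p : MvPolynomial (Fin 3) ℝ,
    p.totalDegree ≤ l + 1 ∧ v = fun i => MvPolynomial.pderiv i p}

/-- The coordinate vector x = (x₁, x₂, x₃) as a polynomial vector field. -/
noncomputable def xvec3 : Fin 3 → MvPolynomial (Fin 3) ℝ := ![X 0, X 1, X 2]

/-- 𝒢^{c,l} = x × 𝒫^{l−1}(ℝ³)³ (reduced to {0} when l = 0). -/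
noncomputable def Gcsp3 (l : ℕ) : Submodule ℝ (Fin 3 → MvPolynomial (Fin 3) ℝ) :=
  Submodule.span ℝ {w | ∃ v : Fin 3 → MvPolynomial (Fin 3) ℝ,
    (∀ i, (v i).totalDegree + 1 ≤ l) ∧ w = crossProduct xvec3 v}

/-! ### Auxiliary machinery -/

abbrev P3 := MvPolynomial (Fin 3) ℝ

/-- The "divergence-like" pairing w ↦ x ⬝ w as a linear map. -/
noncomputable def L3 : (Fin 3 → P3) →ₗ[ℝ] P3 where
  toFun w := X 0 * w 0 + X 1 * w 1 + X 2 * w 2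
  map_add' a b := by simp only [Pi.add_apply]; ring
  map_smul' c a := by
    simp only [Pi.smul_apply, RingHom.id_apply, smul_eq_C_mul]; ring

/-- The gradient as a linear map. -/
noncomputable def gradL : P3 →ₗ[ℝ] (Fin 3 → P3) :=
  LinearMap.pi fun i => (pderiv i).toLinearMap

@[simp] lemma gradL_apply (p : P3) (i : Fin 3) : gradL p i = pderiv i p := rfl
@[simp] lemma L3_apply (w : Fin 3 → P3) : L3 w = X 0 * w 0 + X 1 * w 1 + X 2 * w 2 := rfl

/-- The Euler operator p ↦ x ⬝ ∇p. -/
noncomputable def Dop : P3 →ₗ[ℝ] P3 := L3.comp gradL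

lemma single_add_tsub {d : Fin 3 →₀ ℕ} {i : Fin 3} (h : d i ≠ 0) :
    Finsupp.single i 1 + (d - Finsupp.single i 1) = d := by
  ext j
  simp only [Finsupp.add_apply, Finsupp.tsub_apply, Finsupp.single_apply]
  by_cases hj : i = j
  · subst hj; simpa using by omega
  · simp [hj]

lemma X_mul_pderiv_monomial (i : Fin 3) (d : Fin 3 →₀ ℕ) (c : ℝ) :
    X i * pderiv i (monomial d c) = monomial d (c * d i) := by
  rw [pderiv_monomial]
  by_cases h : d i = 0
  · simp [h]
  · rw [X, monomial_mul, one_mul, single_add_tsub h]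

lemma wt_eq (d : Fin 3 →₀ ℕ) : (d.sum fun _ e => e) = d 0 + d 1 + d 2 := by
  rw [Finsupp.sum_fintype _ _ (fun _ => rfl), Fin.sum_univ_three]

lemma Dop_monomial (d : Fin 3 →₀ ℕ) (c : ℝ) :
    Dop (monomial d c) = monomial d (c * (d.sum fun _ e => e : ℕ)) := by
  have : Dop (monomial d c)
      = X 0 * pderiv 0 (monomial d c) + X 1 * pderiv 1 (monomial d c)
        + X 2 * pderiv 2 (monomial d c) := rfl
  rw [this, X_mul_pderiv_monomial, X_mul_pderiv_monomial, X_mul_pderiv_monomial,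
    ← map_add, ← map_add, wt_eq]
  congr 1
  push_cast
  ring

lemma coeff_Dop (p : P3) (d : Fin 3 →₀ ℕ) :
    coeff d (Dop p) = (d.sum fun _ e => e : ℕ) * coeff d p := by
  conv_lhs => rw [p.as_sum, map_sum]
  rw [coeff_sum]
  simp only [Dop_monomial, coeff_monomial]
  rw [Finset.sum_ite_eq' p.support d]
  by_cases h : d ∈ p.support
  · simp [h, mul_comm]
  · simp only [h, if_false]
    rw [notMem_support_iff.mp h, mul_zero]

lemma wt_ne_zero {d : Fin 3 →₀ ℕ} (hd : d ≠ 0) :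
    (d.sum fun _ e => e : ℕ) ≠ 0 := by
  rw [wt_eq]
  intro h0
  apply hd
  ext j
  fin_cases j <;> simp <;> omega

lemma grad_eq_zero_of_Dop_eq_zero {p : P3} (h : Dop p = 0) (i : Fin 3) :
    pderiv i p = 0 := by
  have hp : p = C (coeff 0 p) := by
    ext d
    by_cases hd : d = 0
    · subst hd; simp
    · have h2 : ((d.sum fun _ e => e : ℕ) : ℝ) * coeff d p = 0 := by
        rw [← coeff_Dop, h, coeff_zero]
      rw [coeff_C, if_neg fun h' => hd h'.symm]
      exact (mul_eq_zero.mp h2).resolve_left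
        (Nat.cast_ne_zero.mpr (wt_ne_zero hd))
  rw [hp, pderiv_C]

lemma exists_Dop_eq {f : P3} (hf : coeff 0 f = 0) :
    ∃ p : P3, Dop p = f ∧ p.totalDegree ≤ f.totalDegree := by
  refine ⟨∑ d ∈ f.support, monomial d (coeff d f * ((d.sum fun _ e => e : ℕ) : ℝ)⁻¹), ?_, ?_⟩
  · rw [map_sum]
    conv_rhs => rw [f.as_sum]
    refine Finset.sum_congr rfl fun d hd => ?_
    rw [Dop_monomial]
    congr 1
    have hd0 : d ≠ 0 := by
      rintro rfl
      exact mem_support_iff.mp hd hf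
    have h1 : ((d.sum fun _ e => e : ℕ) : ℝ) ≠ 0 :=
      Nat.cast_ne_zero.mpr (wt_ne_zero hd0)
    rw [mul_assoc, inv_mul_cancel₀ h1, mul_one]
  · refine (totalDegree_finset_sum _ _).trans (Finset.sup_le fun d hd => ?_)
    exact (totalDegree_monomial_le _ _).trans (le_totalDegree hd)

lemma totalDegree_pderiv_le' (p : P3) (i : Fin 3) {n : ℕ} (hp : p.totalDegree ≤ n + 1) :
    (pderiv i p).totalDegree ≤ n := by
  conv_lhs => rw [p.as_sum]
  rw [map_sum]
  refine (totalDegree_finset_sum _ _).trans (Finset.sup_le fun d hd => ?_)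
  rw [pderiv_monomial]
  by_cases h : d i = 0
  · simp [h]
  · refine (totalDegree_monomial_le _ _).trans ?_
    have hle : (d.sum fun _ e => e) ≤ n + 1 := (le_totalDegree hd).trans hp
    rw [wt_eq] at hle
    refine le_trans (le_of_eq (wt_eq _)) ?_
    simp only [Finsupp.tsub_apply, Finsupp.single_apply]
    fin_cases i <;> simp_all <;> omega

lemma totalDegree_le_X_mul {q : P3} (i : Fin 3) (hq : q ≠ 0) :
    q.totalDegree + 1 ≤ (X i * q).totalDegree := by
  obtain ⟨d, hd, hdeg⟩ : ∃ d ∈ q.support, q.totalDegree = (d.sum fun _ e => e) :=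
    Finset.exists_mem_eq_sup q.support (support_nonempty.mpr hq) _
  have hmem : (Finsupp.single i 1 + d) ∈ (X i * q).support := by
    rw [mem_support_iff, coeff_X_mul]
    exact mem_support_iff.mp hd
  refine le_trans ?_ (le_totalDegree hmem)
  rw [Finsupp.sum_add_index' (fun _ => rfl) (fun _ _ _ => rfl),
    Finsupp.sum_single_index rfl, hdeg]
  omega

lemma totalDegree_aeval_le (u : Fin 3 → P3) (hu : ∀ k, (u k).totalDegree ≤ 1) (p : P3) :
    (aeval u p).totalDegree ≤ p.totalDegree := by
  rw [aeval_def, eval₂_eq]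
  refine (totalDegree_finset_sum _ _).trans (Finset.sup_le fun d hd => ?_)
  refine (totalDegree_mul _ _).trans ?_
  have h1 : ((algebraMap ℝ P3) (coeff d p)).totalDegree = 0 := totalDegree_C _
  rw [h1, zero_add]
  refine (totalDegree_finset_prod _ _).trans (le_trans ?_ (le_totalDegree hd))
  refine Finset.sum_le_sum fun k _ => (totalDegree_pow _ _).trans ?_
  simpa using Nat.mul_le_mul_left (d k) (hu k)

lemma X_dvd_sub_aeval (j : Fin 3) (u : Fin 3 → P3) (huj : u j = 0)
    (hu : ∀ k, k ≠ j → u k = X k) (p : P3) : X j ∣ p - aeval u p := by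
  induction p using MvPolynomial.induction_on with
  | C a => simp [algebraMap_eq]
  | add p q hp hq =>
      have h : p + q - aeval u (p + q) = (p - aeval u p) + (q - aeval u q) := by
        rw [map_add]; ring
      rw [h]; exact dvd_add hp hq
  | mul_X p k hp =>
      by_cases hk : k = j
      · subst hk
        rw [map_mul, aeval_X, huj, mul_zero, sub_zero]
        exact dvd_mul_left (X k) p
      · rw [map_mul, aeval_X, hu k hk]
        have h : p * X k - aeval u p * X k = (p - aeval u p) * X k := by ring
        rw [h]; exact hp.mul_right _

/-- Koszul-type lemma: a polynomial vector field orthogonal to x (as a syzygy of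
x₁, x₂, x₃) is a cross product x × v, with degree control. -/
lemma koszul (k : ℕ) (g : Fin 3 → P3)
    (hrel : X 0 * g 0 + X 1 * g 1 + X 2 * g 2 = 0)
    (hdeg : ∀ i, (g i).totalDegree ≤ k + 1) :
    ∃ v : Fin 3 → P3, crossProduct xvec3 v = g ∧ ∀ i, (v i).totalDegree ≤ k := by
  set u2 : Fin 3 → P3 := ![X 0, X 1, 0] with hu2
  set u1 : Fin 3 → P3 := ![X 0, 0, X 2] with hu1
  have hu2j : u2 2 = 0 := rfl
  have hu2k : ∀ j : Fin 3, j ≠ 2 → u2 j = X j := by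
    intro j hj; fin_cases j <;> first | rfl | simp_all
  have hu1j : u1 1 = 0 := rfl
  have hu1k : ∀ j : Fin 3, j ≠ 1 → u1 j = X j := by
    intro j hj; fin_cases j <;> first | rfl | simp_all
  have hu2deg : ∀ j, (u2 j).totalDegree ≤ 1 := by
    intro j; fin_cases j <;> simp [hu2, totalDegree_X]
  have hu1deg : ∀ j, (u1 j).totalDegree ≤ 1 := by
    intro j; fin_cases j <;> simp [hu1, totalDegree_X]
  set a0 : P3 := aeval u2 (g 0) with ha0def
  set a1 : P3 := aeval u2 (g 1) with ha1def
  -- relation after setting X 2 = 0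
  have hrel2 : X 0 * a0 + X 1 * a1 = 0 := by
    have h := congrArg (aeval u2) hrel
    simpa [map_add, map_mul, aeval_X, hu2, ha0def, ha1def] using h
  -- divide g 0 - a0 and g 1 - a1 by X 2
  obtain ⟨h0, hh0⟩ := X_dvd_sub_aeval 2 u2 hu2j hu2k (g 0)
  obtain ⟨h1, hh1⟩ := X_dvd_sub_aeval 2 u2 hu2j hu2k (g 1)
  rw [← ha0def] at hh0
  rw [← ha1def] at hh1
  -- a0 is divisible by X 1
  have hpsi : aeval u1 a0 = 0 := by
    have h := congrArg (aeval u1) hrel2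
    simp only [map_add, map_mul, aeval_X, map_zero, hu1j] at h
    have h' : X 0 * aeval u1 a0 = 0 := by
      simpa [hu1k 0 (by decide), hu1j] using h
    rcases mul_eq_zero.mp h' with h'' | h''
    · exact absurd h'' (X_ne_zero 0)
    · exact h''
  obtain ⟨s, hs⟩ := X_dvd_sub_aeval 1 u1 hu1j hu1k a0
  rw [hpsi, sub_zero] at hs
  -- a1 = -(X 0 * s)
  have ha1 : a1 = -(X 0 * s) := by
    have h' : X 1 * (a1 + X 0 * s) = 0 := by linear_combination hrel2 - X 0 * hs
    rcases mul_eq_zero.mp h' with h'' | h''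
    · exact absurd h'' (X_ne_zero 1)
    · linear_combination h''
  -- explicit forms of g 0 and g 1
  have hg0 : g 0 = X 1 * s + X 2 * h0 := by linear_combination hh0 + hs
  have hg1 : g 1 = -(X 0 * s) + X 2 * h1 := by linear_combination hh1 + ha1
  have hg2 : g 2 = -(X 0 * h0 + X 1 * h1) := by
    have hX2 : (X 2 : P3) ≠ 0 := X_ne_zero 2
    apply mul_left_cancel₀ hX2
    linear_combination hrel - X 0 * hg0 - X 1 * hg1
  refine ⟨![h1, -h0, s], ?_, ?_⟩
  · funext i
    fin_cases i <;>
      simp [cross_apply, xvec3] <;>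
      [linear_combination -hg0; linear_combination -hg1; linear_combination -hg2]
  · -- degree bounds
    have ha0deg : a0.totalDegree ≤ k + 1 := (totalDegree_aeval_le u2 hu2deg _).trans (hdeg 0)
    have ha1deg : a1.totalDegree ≤ k + 1 := (totalDegree_aeval_le u2 hu2deg _).trans (hdeg 1)
    have hq : ∀ (q r : P3) (i : Fin 3), X i * q = r → r.totalDegree ≤ k + 1 →
        q.totalDegree ≤ k := by
      intro q r i hqr hr
      by_cases h : q = 0
      · simp [h]
      · have := totalDegree_le_X_mul i h
        rw [hqr] at this
        omega
    have hd0 : h0.totalDegree ≤ k := by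
      refine hq h0 (g 0 - a0) 2 hh0.symm ?_
      exact (totalDegree_sub _ _).trans (max_le (hdeg 0) ha0deg)
    have hd1 : h1.totalDegree ≤ k := by
      refine hq h1 (g 1 - a1) 2 hh1.symm ?_
      exact (totalDegree_sub _ _).trans (max_le (hdeg 1) ha1deg)
    have hds : s.totalDegree ≤ k := hq s a0 1 hs.symm ha0deg
    intro i
    fin_cases i <;> simp [totalDegree_neg] <;> assumption

lemma eq_C_of_td_zero {q : P3} (h : q.totalDegree ≤ 0) : q = C (coeff 0 q) := by
  ext d
  by_cases hd : d = 0
  · subst hd; simp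
  · rw [coeff_C, if_neg fun h' => hd h'.symm]
    by_contra hne
    have hmem : d ∈ q.support := mem_support_iff.mpr hne
    exact wt_ne_zero hd (Nat.le_zero.mp ((le_totalDegree hmem).trans h))

lemma Gcsp3_le_ker (l : ℕ) : Gcsp3 l ≤ LinearMap.ker L3 := by
  rw [Gcsp3, Submodule.span_le]
  rintro w ⟨v, hv, rfl⟩
  simp only [SetLike.mem_coe, LinearMap.mem_ker, L3_apply, cross_apply, xvec3]
  simp only [Matrix.cons_val_zero, Matrix.cons_val_one, Matrix.head_cons,
    Matrix.cons_val_two, Matrix.tail_cons]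
  ring

lemma Gsp3_le_range (l : ℕ) : Gsp3 l ≤ LinearMap.range gradL := by
  rw [Gsp3, Submodule.span_le]
  rintro w ⟨p, hp, rfl⟩
  exact ⟨p, rfl⟩

lemma inf_eq_bot (l : ℕ) : Gsp3 l ⊓ Gcsp3 l = ⊥ := by
  rw [eq_bot_iff]
  rintro w ⟨hw1, hw2⟩
  obtain ⟨p, rfl⟩ := Gsp3_le_range l hw1
  have hD : Dop p = 0 := Gcsp3_le_ker l hw2
  have : ∀ i, pderiv i p = 0 := grad_eq_zero_of_Dop_eq_zero hD
  simp only [Submodule.mem_bot]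
  funext i
  simp [this i]

lemma sup_le_polyVec (l : ℕ) : Gsp3 l ⊔ Gcsp3 l ≤ polyVec3 l := by
  apply sup_le
  · rw [Gsp3, Submodule.span_le]
    rintro w ⟨p, hp, rfl⟩
    intro i _
    exact (mem_restrictTotalDegree _ _ _).mpr (totalDegree_pderiv_le' p i hp)
  · rw [Gcsp3, Submodule.span_le]
    rintro w ⟨v, hv, rfl⟩
    intro i _
    rw [SetLike.mem_coe, mem_restrictTotalDegree]
    have haux : ∀ (a b : Fin 3), (X a * v b : P3).totalDegree ≤ l := by
      intro a b
      refine (totalDegree_mul _ _).trans ?_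
      rw [totalDegree_X]
      have := hv b
      omega
    fin_cases i <;>
      simp only [cross_apply, xvec3, Matrix.cons_val_zero, Matrix.cons_val_one,
        Matrix.head_cons, Matrix.cons_val_two, Matrix.tail_cons] <;>
      exact (totalDegree_sub _ _).trans (max_le (haux _ _) (haux _ _))

lemma polyVec_le_sup (l : ℕ) : polyVec3 l ≤ Gsp3 l ⊔ Gcsp3 l := by
  intro F hF
  have hFdeg : ∀ i, (F i).totalDegree ≤ l := by
    intro i
    exact (mem_restrictTotalDegree _ _ _).mp (hF i (Set.mem_univ i))
  set f : P3 := L3 F with hfdef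
  have hconst : coeff 0 f = 0 := by
    have : constantCoeff f = 0 := by
      simp only [hfdef, L3_apply, map_add, map_mul, constantCoeff_X, zero_mul, add_zero]
    rwa [constantCoeff_eq] at this
  have hfdeg : f.totalDegree ≤ l + 1 := by
    rw [hfdef, L3_apply]
    refine (totalDegree_add _ _).trans (max_le ((totalDegree_add _ _).trans (max_le ?_ ?_)) ?_) <;>
      · refine (totalDegree_mul _ _).trans ?_
        rw [totalDegree_X]
        have := hFdeg 0; have := hFdeg 1; have := hFdeg 2
        omega
  obtain ⟨p, hDp, hpdeg⟩ := exists_Dop_eq hconst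
  have hpdeg' : p.totalDegree ≤ l + 1 := hpdeg.trans hfdeg
  set G : Fin 3 → P3 := F - gradL p with hGdef
  have hLG : L3 G = 0 := by
    rw [hGdef, map_sub]
    have : L3 (gradL p) = Dop p := rfl
    rw [this, hDp, hfdef, sub_self]
  have hGrel : X 0 * G 0 + X 1 * G 1 + X 2 * G 2 = 0 := hLG
  have hGdeg : ∀ i, (G i).totalDegree ≤ l := by
    intro i
    have : G i = F i - pderiv i p := rfl
    rw [this]
    exact (totalDegree_sub _ _).trans (max_le (hFdeg i) (totalDegree_pderiv_le' p i hpdeg'))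
  have hgradmem : gradL p ∈ Gsp3 l :=
    Submodule.subset_span ⟨p, hpdeg', rfl⟩
  cases l with
  | zero =>
    -- here G = 0, so F = gradL p
    have hC : ∀ i, G i = C (coeff 0 (G i)) := fun i => eq_C_of_td_zero (hGdeg i)
    have hzero : ∀ i, G i = 0 := by
      have h0 := congrArg (eval (Pi.single (0 : Fin 3) (1 : ℝ))) hGrel
      have h1 := congrArg (eval (Pi.single (1 : Fin 3) (1 : ℝ))) hGrel
      have h2 := congrArg (eval (Pi.single (2 : Fin 3) (1 : ℝ))) hGrel
      rw [hC 0, hC 1, hC 2] at h0 h1 h2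
      simp only [map_add, map_mul, eval_X, eval_C, map_zero, Pi.single_eq_same,
        Pi.single_eq_of_ne (by decide : (1 : Fin 3) ≠ 0),
        Pi.single_eq_of_ne (by decide : (2 : Fin 3) ≠ 0),
        Pi.single_eq_of_ne (by decide : (0 : Fin 3) ≠ 1),
        Pi.single_eq_of_ne (by decide : (2 : Fin 3) ≠ 1),
        Pi.single_eq_of_ne (by decide : (0 : Fin 3) ≠ 2),
        Pi.single_eq_of_ne (by decide : (1 : Fin 3) ≠ 2),
        one_mul, zero_mul, add_zero, zero_add] at h0 h1 h2
      intro i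
      fin_cases i
      · show G 0 = 0; rw [hC 0, h0, map_zero]
      · show G 1 = 0; rw [hC 1, h1, map_zero]
      · show G 2 = 0; rw [hC 2, h2, map_zero]
    have hFG : F = gradL p := by
      funext i
      have h' : F i - gradL p i = 0 := hzero i
      exact sub_eq_zero.mp h'
    rw [hFG]
    exact Submodule.mem_sup_left hgradmem
  | succ m =>
    obtain ⟨v, hcross, hvdeg⟩ := koszul m G hGrel (fun i => (hGdeg i).trans (by omega))
    have hcmem : crossProduct xvec3 v ∈ Gcsp3 (m + 1) :=
      Submodule.subset_span ⟨v, fun i => by have := hvdeg i; omega, rfl⟩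
    have hFsum : F = gradL p + crossProduct xvec3 v := by
      rw [hcross, hGdef]
      funext i
      simp
    rw [hFsum]
    exact Submodule.add_mem_sup hgradmem hcmem

/-- For every `l ≥ 0`, the ℝ³-valued polynomial fields of degree ≤ l decompose as
the direct sum 𝒢^l ⊕ 𝒢^{c,l}. -/
theorem polyVec3_eq_grad_directSum_gradComplement (l : ℕ) :
    Gsp3 l ⊔ Gcsp3 l = polyVec3 l ∧ Gsp3 l ⊓ Gcsp3 l = ⊥ :=
  ⟨le_antisymm (sup_le_polyVec l) (polyVec_le_sup l), inf_eq_bot l⟩
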